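/- For every natural number r ≥ 3, setting k = 2r+1 and n = k!/2, there exists a Mondrian partition of the n×n square into exactly k rectangles whose defect equals ((k−1)!!)²/2, where (k−1)!! = (k−1)(k−3)···2 is the double factorial; in particular d_k(n) ≤ ((k−1)!!)²/2 and d(n) ≤ ((k−1)!!)²/2. -/

import Mathlib

/-- An axis-aligned rectangle with integer coordinates placed on the grid:
lower-left corner `(x, y)`, width `w`, and height `h`. -/
structure Rect where
  x : ℕ
  y : ℕ
  w : ℕ
  h : ℕ
deriving DecidableEq

/-- The area of a rectangle. -/
def Rect.area (r : Rect) : ℕ := r.w * r.h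

/-- Two rectangles are congruent if they have the same dimensions,
possibly after a ninety-degree rotation. -/
def Rect.Congruent (r s : Rect) : Prop :=
  (r.w = s.w ∧ r.h = s.h) ∨ (r.w = s.h ∧ r.h = s.w)

/-- The rectangle `r` covers the unit grid cell `[i, i+1) × [j, j+1)`. -/
def Rect.Covers (r : Rect) (i j : ℕ) : Prop :=
  r.x ≤ i ∧ i < r.x + r.w ∧ r.y ≤ j ∧ j < r.y + r.h

/-- A Mondrian partition of the `n × n` square: a finite collection of
pairwise non-congruent rectangles with positive integer side lengths that
tile the square (every cell of the square is covered by exactly one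
rectangle, and rectangles lie inside the square). -/
structure Mondrian (n : ℕ) where
  rects : Finset Rect
  pos : ∀ r ∈ rects, 0 < r.w ∧ 0 < r.h
  inside : ∀ r ∈ rects, r.x + r.w ≤ n ∧ r.y + r.h ≤ n
  cover : ∀ i j : ℕ, i < n → j < n → ∃! r : Rect, r ∈ rects ∧ r.Covers i j
  noncong : ∀ r ∈ rects, ∀ s ∈ rects, r ≠ s → ¬ r.Congruent s

/-- The defect of a Mondrian partition: the difference between the largest
and the smallest rectangle areas. -/
def Mondrian.defect {n : ℕ} (P : Mondrian n) : ℕ :=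
  P.rects.sup fun r => P.rects.sup fun s => r.area - s.area

/-- A Mondrian partition is perfect if all its rectangles have the same area. -/
def Mondrian.IsPerfect {n : ℕ} (P : Mondrian n) : Prop :=
  ∀ r ∈ P.rects, ∀ s ∈ P.rects, r.area = s.area

/-- `mondrianDk n k` is the minimum defect over all Mondrian partitions of the
`n × n` square using exactly `k` rectangles. -/
noncomputable def mondrianDk (n k : ℕ) : ℕ :=
  sInf {d | ∃ P : Mondrian n, P.rects.card = k ∧ P.defect = d}

/-- `mondrianD n` is the minimum defect over all Mondrian partitions of the
`n × n` square (into at least two rectangles). -/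
noncomputable def mondrianD (n : ℕ) : ℕ :=
  sInf {d | ∃ P : Mondrian n, 2 ≤ P.rects.card ∧ P.defect = d}



namespace Spiral
open Finset

def fall (a b : ℕ) : ℕ := ∏ i ∈ Finset.Ioc a b, i
def od (a b : ℕ) : ℕ := ∏ i ∈ Finset.Ioc a b, (2*i - 1)
def ev0 (b : ℕ) : ℕ := ∏ i ∈ Finset.Ioc 0 b, (2*i)

lemma fall_pos (a b : ℕ) : 0 < fall a b :=
  Finset.prod_pos fun i hi => Nat.pos_of_ne_zero (by have := (Finset.mem_Ioc.1 hi).1; omega)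

lemma od_pos (a b : ℕ) : 0 < od a b :=
  Finset.prod_pos fun i hi => by have := (Finset.mem_Ioc.1 hi).1; omega

lemma ev0_pos (b : ℕ) : 0 < ev0 b :=
  Finset.prod_pos fun i hi => by have := (Finset.mem_Ioc.1 hi).1; omega

lemma fall_consec {a b c : ℕ} (hab : a ≤ b) (hbc : b ≤ c) :
    fall a b * fall b c = fall a c := Finset.prod_Ioc_consecutive _ hab hbc

lemma od_consec {a b c : ℕ} (hab : a ≤ b) (hbc : b ≤ c) :
    od a b * od b c = od a c := Finset.prod_Ioc_consecutive _ hab hbc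

lemma fall_succ_top {a b : ℕ} (h : a ≤ b) : fall a (b+1) = fall a b * (b+1) :=
  Finset.prod_Ioc_succ_top h _

lemma od_succ_top {a b : ℕ} (h : a ≤ b) : od a (b+1) = od a b * (2*b+1) := by
  have := Finset.prod_Ioc_succ_top h (fun i => 2*i - 1)
  simpa [od, Nat.mul_add] using this

lemma ev0_succ_top (b : ℕ) : ev0 (b+1) = ev0 b * (2*(b+1)) :=
  Finset.prod_Ioc_succ_top (Nat.zero_le _) _

lemma fall_self (a : ℕ) : fall a a = 1 := by simp [fall]
lemma od_self (a : ℕ) : od a a = 1 := by simp [od]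

lemma fall_succ_bot {a b : ℕ} (h : a < b) : fall a b = (a+1) * fall (a+1) b := by
  rw [← fall_consec (Nat.le_succ a) h]
  congr 1
  simp [fall, Nat.Ioc_succ_singleton]

lemma od_succ_bot {a b : ℕ} (h : a < b) : od a b = (2*a+1) * od (a+1) b := by
  rw [← od_consec (Nat.le_succ a) h]
  congr 1
  simp [od, Nat.Ioc_succ_singleton, Nat.mul_add]

lemma ev0_eq (b : ℕ) : ev0 b = 2^b * fall 0 b := by
  induction b with
  | zero => simp [ev0, fall]
  | succ n ih => rw [ev0_succ_top, ih, fall_succ_top (Nat.zero_le _), pow_succ]; ring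

lemma fall0_eq_factorial (n : ℕ) : fall 0 n = n.factorial := by
  induction n with
  | zero => simp [fall]
  | succ n ih => rw [fall_succ_top (Nat.zero_le _), ih, Nat.factorial_succ]; ring

lemma od0_eq_doubleFactorial (n : ℕ) : od 0 (n+1) = Nat.doubleFactorial (2*n+1) := by
  induction n with
  | zero => simp [od, Nat.Ioc_succ_singleton, Nat.doubleFactorial]
  | succ n ih =>
      rw [od_succ_top (Nat.zero_le _), ih]
      have : 2*(n+1)+1 = (2*n+1) + 2 := by ring
      rw [this, Nat.doubleFactorial_add_two]
      ring

lemma odd_od (a b : ℕ) : Odd (od a b) := by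
  induction b with
  | zero => simp [od]
  | succ n ih =>
      by_cases h : a ≤ n
      · rw [od_succ_top h]
        exact ih.mul (Nat.odd_iff.2 (by omega))
      · have he : Finset.Ioc a (n+1) = ∅ := Finset.Ioc_eq_empty (by omega)
        simp [od, he]

lemma ev0_lt_od0_succ (m : ℕ) : ev0 (m+1) > od 0 (m+1) := by
  apply Finset.prod_lt_prod_of_nonempty
  · intro i hi; have := (Finset.mem_Ioc.1 hi).1; omega
  · intro i hi; have := (Finset.mem_Ioc.1 hi).1; omega
  · exact ⟨1, by simp⟩

end Spiral
namespace Spiral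
open Finset

variable (r : ℕ)

def bX (m : ℕ) : ℕ := od 0 (m+1) * 2^(2*r - m - 1) * fall 0 r * fall m r
def bG (m : ℕ) : ℕ := od 0 (r+1) * od m r * 2^(m-1) * fall 0 m
def vw (m : ℕ) : ℕ := od 0 (m+1) * 2^(2*r - m - 2) * fall 0 r * fall (m+1) r
def hh (m : ℕ) : ℕ := od 0 (r+1) * od (m+1) r * 2^(m-1) * fall 0 m
def NN : ℕ := od 0 (r+1) * 2^(r-1) * fall 0 r
def W : ℕ := od 0 (r+1) * od 0 r
def half : ℕ := 2^(2*r-2) * fall 0 r * fall 0 r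
def g : ℕ := W r / 2
def S : ℕ := W r * half r

lemma bX_pos (m : ℕ) : 0 < bX r m :=
  Nat.mul_pos (Nat.mul_pos (Nat.mul_pos (od_pos _ _) ((by positivity))) (fall_pos _ _)) (fall_pos _ _)

lemma vw_pos (m : ℕ) : 0 < vw r m :=
  Nat.mul_pos (Nat.mul_pos (Nat.mul_pos (od_pos _ _) ((by positivity))) (fall_pos _ _)) (fall_pos _ _)

lemma hh_pos (m : ℕ) : 0 < hh r m :=
  Nat.mul_pos (Nat.mul_pos (Nat.mul_pos (od_pos _ _) (od_pos _ _)) ((by positivity))) (fall_pos _ _)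

lemma bG_pos (m : ℕ) : 0 < bG r m :=
  Nat.mul_pos (Nat.mul_pos (Nat.mul_pos (od_pos _ _) (od_pos _ _)) ((by positivity))) (fall_pos _ _)

lemma two_g_add_one (hr : 1 ≤ r) : 2 * g r + 1 = W r := by
  have h := (odd_od 0 (r+1)).mul (odd_od 0 r)
  have : W r % 2 = 1 := Nat.odd_iff.1 h
  unfold g
  omega

lemma W_ge_three (hr : 1 ≤ r) : 3 ≤ W r := by
  have h1 : 2*(r+1) - 1 ≤ od 0 (r+1) := by
    apply Finset.single_le_prod' (f := fun i => 2*i-1)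
    · intro i hi; have := (Finset.mem_Ioc.1 hi).1; omega
    · simp
  have h2 : 0 < od 0 r := od_pos _ _
  calc 3 ≤ (2*(r+1)-1) * 1 := by omega
  _ ≤ od 0 (r+1) * od 0 r := Nat.mul_le_mul h1 h2
  _ = W r := rfl

lemma bX_top : bX r r = NN r := by
  unfold bX NN
  rw [fall_self]
  have : 2*r - r - 1 = r - 1 := by omega
  rw [this]; ring

lemma bG_top : bG r r = NN r := by
  unfold bG NN
  rw [od_self]
  ring

lemma od_zero_one : od 0 1 = 1 := by
  simp [od, Nat.Ioc_succ_singleton]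

lemma bX_zero (hr : 1 ≤ r) : bX r 0 = 2 * half r := by
  unfold bX half
  rw [od_zero_one]
  have h : 2*r - 0 - 1 = (2*r - 2) + 1 := by omega
  rw [h, pow_succ]
  ring

/-- `bX` increment -/
lemma bX_step {m : ℕ} (hm : m < r) : bX r (m+1) = bX r m + vw r m := by
  unfold bX vw
  rw [od_succ_top (Nat.zero_le _), fall_succ_bot hm]
  have h1 : 2*r - m - 1 = (2*r - m - 2) + 1 := by omega
  have h2 : 2*r - (m+1) - 1 = 2*r - m - 2 := by omega
  rw [h1, h2, pow_succ]
  ring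

/-- `bG` increment -/
lemma bG_step {m : ℕ} (hm1 : 1 ≤ m) (hm : m < r) : bG r (m+1) = bG r m + hh r m := by
  unfold bG hh
  rw [od_succ_bot hm, fall_succ_top (Nat.zero_le _)]
  have h1 : (m+1) - 1 = (m - 1) + 1 := by omega
  rw [h1, pow_succ]
  ring

lemma vw_mul_bG (m : ℕ) (hm : m < r) : vw r m * bG r (m+1) = S r := by
  unfold vw bG S W half
  rw [show (m+1) - 1 = m by omega]
  have h1 : od 0 (m+1) * od (m+1) r = od 0 r := od_consec (by omega) (by omega)
  have h2 : fall 0 (m+1) * fall (m+1) r = fall 0 r := fall_consec (by omega) (by omega)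
  have h3 : (2:ℕ)^(2*r - m - 2) * 2^m = 2^(2*r-2) := by
    rw [← pow_add]; congr 1; omega
  calc od 0 (m+1) * 2^(2*r - m - 2) * fall 0 r * fall (m+1) r *
        (od 0 (r+1) * od (m+1) r * 2^m * fall 0 (m+1))
      = od 0 (r+1) * (od 0 (m+1) * od (m+1) r) * ((2:ℕ)^(2*r - m - 2) * 2^m) *
        fall 0 r * (fall 0 (m+1) * fall (m+1) r) := by ring
    _ = od 0 (r+1) * od 0 r * (2^(2*r-2) * fall 0 r * fall 0 r) := by
        rw [h1, h2, h3]; ring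

lemma bX_mul_hh (m : ℕ) (hm1 : 1 ≤ m) (hm : m < r) : bX r m * hh r m = S r := by
  unfold bX hh S W half
  have h1 : od 0 (m+1) * od (m+1) r = od 0 r := od_consec (by omega) (by omega)
  have h2 : fall 0 m * fall m r = fall 0 r := fall_consec (by omega) (by omega)
  have h3 : (2:ℕ)^(2*r - m - 1) * 2^(m-1) = 2^(2*r-2) := by
    rw [← pow_add]; congr 1; omega
  calc od 0 (m+1) * 2^(2*r - m - 1) * fall 0 r * fall m r *
        (od 0 (r+1) * od (m+1) r * 2^(m-1) * fall 0 m)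
      = od 0 (r+1) * (od 0 (m+1) * od (m+1) r) * ((2:ℕ)^(2*r - m - 1) * 2^(m-1)) *
        fall 0 r * (fall 0 m * fall m r) := by ring
    _ = od 0 (r+1) * od 0 r * (2^(2*r-2) * fall 0 r * fall 0 r) := by
        rw [h1, h2, h3]; ring

lemma bG_one (hr : 1 ≤ r) : bG r 1 = W r := by
  unfold bG W
  rw [show (1:ℕ) - 1 = 0 by rfl, pow_zero]
  have h : fall 0 1 = 1 := by simp [fall, Nat.Ioc_succ_singleton]
  rw [h, od_succ_bot (by omega : 0 < r)]
  norm_num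

lemma S_eq (hr : 1 ≤ r) : S r = 2 * half r * g r + half r := by
  have h := two_g_add_one r hr
  unfold S
  rw [← h]
  ring

-- H r area: bX r 0 * (g+1) = S + half ; V (r+1) area: bX r 0 * g = S - half
lemma area_Hr (hr : 1 ≤ r) : bX r 0 * (g r + 1) = S r + half r := by
  rw [bX_zero r hr, S_eq r hr]; ring

lemma area_Vlast (hr : 1 ≤ r) : bX r 0 * g r + half r = S r := by
  rw [bX_zero r hr, S_eq r hr]

end Spiral
namespace Spiral
open Finset

lemma pow_split (a b : ℕ) (h : b ≤ a) : (2:ℕ)^a = 2^(a-b) * 2^b := by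
  obtain ⟨d, h1, h2⟩ : ∃ d, a - b = d ∧ a = d + b := ⟨a - b, rfl, by omega⟩
  rw [h1, h2, pow_add]

/-- `3·(2m)!! ≤ 2·(2m+1)!!` for `m ≥ 1`. -/
lemma three_ev0_le (m : ℕ) (hm : 1 ≤ m) : 3 * ev0 m ≤ 2 * od 0 (m+1) := by
  induction m, hm using Nat.le_induction with
  | base =>
      have h1 : ev0 1 = 2 := by simp [ev0, Nat.Ioc_succ_singleton]
      have h2 : od 0 2 = 3 := by
        rw [od_succ_top (Nat.zero_le 1), od_zero_one]
      rw [h1, h2]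
  | succ m hm ih =>
      rw [ev0_succ_top, od_succ_top (Nat.zero_le _)]
      calc 3 * (ev0 m * (2*(m+1))) = 3 * ev0 m * (2*m+2) := by ring
        _ ≤ 2 * od 0 (m+1) * (2*m+2) := Nat.mul_le_mul_right _ ih
        _ ≤ 2 * od 0 (m+1) * (2*(m+1)+1) := Nat.mul_le_mul_left _ (by omega)
        _ = 2 * (od 0 (m+1) * (2*(m+1)+1)) := by ring

/-- `2·(2r+1)!!·(2r−1)!! < 3·((2r)!!)²`. -/
lemma two_W_lt (r : ℕ) (hr : 1 ≤ r) : 2 * (od 0 (r+1) * od 0 r) < 3 * (ev0 r)^2 := by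
  induction r, hr using Nat.le_induction with
  | base =>
      have h1 : ev0 1 = 2 := by simp [ev0, Nat.Ioc_succ_singleton]
      have h2 : od 0 2 = 3 := by rw [od_succ_top (Nat.zero_le 1), od_zero_one]
      rw [h1, h2, od_zero_one]; norm_num
  | succ r hr ih =>
      have e1 : od 0 (r+1+1) = od 0 (r+1) * (2*(r+1)+1) := od_succ_top (Nat.zero_le _)
      have e0 : od 0 (r+1) = od 0 r * (2*r+1) := od_succ_top (Nat.zero_le _)
      have ee : ev0 (r+1) = ev0 r * (2*(r+1)) := ev0_succ_top r
      have h1 : 2 * (od 0 (r+1+1) * od 0 (r+1))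
          = (2 * (od 0 (r+1) * od 0 r)) * ((2*(r+1)+1)*(2*r+1)) := by
        rw [e1, e0]; ring
      have h2 : 3 * (ev0 (r+1))^2 = (3 * (ev0 r)^2) * ((2*(r+1))*(2*(r+1))) := by
        rw [ee]; ring
      rw [h1, h2]
      calc (2 * (od 0 (r+1) * od 0 r)) * ((2*(r+1)+1)*(2*r+1))
          < (3 * (ev0 r)^2) * ((2*(r+1)+1)*(2*r+1)) :=
            (Nat.mul_lt_mul_right (by positivity)).2 ih
        _ ≤ (3 * (ev0 r)^2) * ((2*(r+1))*(2*(r+1))) :=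
            Nat.mul_le_mul_left _ (by nlinarith)

/-- `(r+1)·((2r)!!)² ≤ (2r+1)·(2r+1)!!·(2r−1)!!`. -/
lemma J_ineq (r : ℕ) (hr : 1 ≤ r) : (r+1) * (ev0 r)^2 ≤ (2*r+1) * (od 0 (r+1) * od 0 r) := by
  induction r, hr using Nat.le_induction with
  | base =>
      have h1 : ev0 1 = 2 := by simp [ev0, Nat.Ioc_succ_singleton]
      have h2 : od 0 2 = 3 := by rw [od_succ_top (Nat.zero_le 1), od_zero_one]
      rw [h1, h2, od_zero_one]; norm_num
  | succ r hr ih =>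
      have e1 : od 0 (r+1+1) = od 0 (r+1) * (2*(r+1)+1) := od_succ_top (Nat.zero_le _)
      have e0 : od 0 (r+1) = od 0 r * (2*r+1) := od_succ_top (Nat.zero_le _)
      have ee : ev0 (r+1) = ev0 r * (2*(r+1)) := ev0_succ_top r
      have h2 : (r+1+1) * (ev0 (r+1))^2 = ((r+1) * (ev0 r)^2) * (2*(r+1))^2 + (ev0 r * (2*(r+1)))^2 := by
        rw [ee]; ring
      have h1 : (2*(r+1)+1) * (od 0 (r+1+1) * od 0 (r+1))
          = ((2*r+1) * (od 0 (r+1) * od 0 r)) * ((2*(r+1)+1)^2) := by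
        rw [e1, e0]; ring
      refine Nat.le_of_mul_le_mul_left ?_ (show 0 < r+1 by omega)
      calc (r+1) * ((r+1+1) * (ev0 (r+1))^2)
          = ((r+1) * (ev0 r)^2) * ((r+2) * (2*(r+1))^2) := by rw [ee]; ring
        _ ≤ ((2*r+1) * (od 0 (r+1) * od 0 r)) * ((r+2) * (2*(r+1))^2) :=
            Nat.mul_le_mul_right _ ih
        _ ≤ ((2*r+1) * (od 0 (r+1) * od 0 r)) * ((r+1) * (2*(r+1)+1)^2) := by
            apply Nat.mul_le_mul_left; nlinarith
        _ = (r+1) * ((2*(r+1)+1) * (od 0 (r+1+1) * od 0 (r+1))) := by rw [h1]; ring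

variable (r : ℕ)

lemma ev0_sq (hr : 1 ≤ r) : (ev0 r)^2 = 2 * bX r 0 := by
  rw [ev0_eq, bX_zero r hr]
  unfold half
  have h4 : (2:ℕ)^(2*r) = 2^(2*r-2) * 2^2 := pow_split (2*r) 2 (by omega)
  calc (2^r * fall 0 r)^2 = (2^r*2^r) * (fall 0 r * fall 0 r) := by ring
    _ = 2^(2*r) * (fall 0 r * fall 0 r) := by rw [← pow_add]; congr 2; omega
    _ = 2 * (2 * (2^(2*r-2) * fall 0 r * fall 0 r)) := by rw [h4]; ring

/-- smalls of the horizontal rectangles are `< bX r 0`. -/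
lemma hh_lt (m : ℕ) (hm1 : 1 ≤ m) (hm : m < r) : hh r m < bX r 0 := by
  have hr1 : 1 ≤ r := by omega
  have h2hh : 2 * hh r m = od 0 (r+1) * od (m+1) r * ev0 m := by
    unfold hh
    rw [ev0_eq]
    have : (2:ℕ)^m = 2 * 2^(m-1) := by
      rw [← pow_succ']; congr 1; omega
    rw [this]; ring
  have hcons : od 0 (m+1) * od (m+1) r = od 0 r := od_consec (by omega) (by omega)
  have step1 : 3 * (2 * hh r m) ≤ 2 * (od 0 (r+1) * od 0 r) := by
    rw [h2hh, ← hcons]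
    calc 3 * (od 0 (r+1) * od (m+1) r * ev0 m)
        = (od 0 (r+1) * od (m+1) r) * (3 * ev0 m) := by ring
      _ ≤ (od 0 (r+1) * od (m+1) r) * (2 * od 0 (m+1)) :=
          Nat.mul_le_mul_left _ (three_ev0_le m hm1)
      _ = 2 * (od 0 (r+1) * (od 0 (m+1) * od (m+1) r)) := by ring
  have step2 : 2 * (od 0 (r+1) * od 0 r) < 3 * (ev0 r)^2 := two_W_lt r hr1
  have step3 : 3 * (ev0 r)^2 = 6 * bX r 0 := by rw [ev0_sq r hr1]; ring
  omega

/-- smalls of the vertical rectangles are `< bX r 0`. -/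
lemma vw_lt (m : ℕ) (hm : m < r) : vw r m < bX r 0 := by
  have hr1 : 1 ≤ r := by omega
  have key : vw r m * ev0 (m+1) = od 0 (m+1) * bX r 0 := by
    unfold vw
    rw [ev0_eq, bX_zero r hr1]
    unfold half
    have hsplit : fall 0 (m+1) * fall (m+1) r = fall 0 r := fall_consec (by omega) (by omega)
    have hpow : (2:ℕ)^(2*r-m-2) * 2^(m+1) = 2 * 2^(2*r-2) := by
      rw [← pow_add]
      have : 2*r-m-2 + (m+1) = (2*r-2) + 1 := by omega
      rw [this, pow_succ]; ring
    calc od 0 (m+1) * 2^(2*r-m-2) * fall 0 r * fall (m+1) r * (2^(m+1) * fall 0 (m+1))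
        = od 0 (m+1) * (2^(2*r-m-2) * 2^(m+1)) * fall 0 r * (fall 0 (m+1) * fall (m+1) r) := by
          ring
      _ = od 0 (m+1) * (2 * 2^(2*r-2)) * fall 0 r * fall 0 r := by rw [hpow, hsplit]
      _ = od 0 (m+1) * (2 * (2^(2*r-2) * fall 0 r * fall 0 r)) := by ring
  have hlt : od 0 (m+1) < ev0 (m+1) := ev0_lt_od0_succ m
  have h : vw r m * ev0 (m+1) < bX r 0 * ev0 (m+1) := by
    rw [key]
    calc od 0 (m+1) * bX r 0 < ev0 (m+1) * bX r 0 := (Nat.mul_lt_mul_right (bX_pos r 0)).2 hlt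
      _ = bX r 0 * ev0 (m+1) := by ring
  exact Nat.lt_of_mul_lt_mul_right h

/-- `bX r 0 < W r`. -/
lemma bX0_lt_W (hr : 1 ≤ r) : bX r 0 < W r := by
  have hJ := J_ineq r hr
  rw [ev0_sq r hr] at hJ
  have hWpos : 0 < W r := Nat.mul_pos (od_pos _ _) (od_pos _ _)
  have h : (2*(r+1)) * bX r 0 < (2*(r+1)) * W r := by
    calc (2*(r+1)) * bX r 0 = (r+1) * (2 * bX r 0) := by ring
      _ ≤ (2*r+1) * W r := hJ
      _ < (2*(r+1)) * W r := (Nat.mul_lt_mul_right hWpos).2 (by omega)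
  exact Nat.lt_of_mul_lt_mul_left h

end Spiral
namespace Spiral
open Finset

local notation "pv" => padicValNat 2

lemma pv_odd {n : ℕ} (h : Odd n) : pv n = 0 :=
  padicValNat.eq_zero_of_not_dvd (by rw [Nat.odd_iff] at h; omega)

lemma pv_psi_strictMono : StrictMono (fun t => t + pv (fall 0 t)) := by
  apply strictMono_nat_of_lt_succ
  intro t
  show t + pv (fall 0 t) < (t+1) + pv (fall 0 (t+1))
  rw [fall_succ_top (Nat.zero_le t),
    padicValNat.mul (fall_pos 0 t).ne' (by omega)]
  omega

lemma pv_fall_add {m t : ℕ} (h : m ≤ t) :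
    pv (fall 0 m) + pv (fall m t) = pv (fall 0 t) := by
  rw [← padicValNat.mul (fall_pos 0 m).ne' (fall_pos m t).ne',
    fall_consec (Nat.zero_le m) h]

lemma pv_bX (r m : ℕ) : pv (bX r m) = (2*r - m - 1) + pv (fall 0 r) + pv (fall m r) := by
  unfold bX
  have p1 : 0 < (2:ℕ)^(2*r - m - 1) := (by positivity)
  rw [padicValNat.mul (Nat.mul_pos (Nat.mul_pos (od_pos _ _) p1) (fall_pos 0 r)).ne' (fall_pos m r).ne',
    padicValNat.mul (Nat.mul_pos (od_pos _ _) p1).ne' (fall_pos 0 r).ne',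
    padicValNat.mul (od_pos 0 (m+1)).ne' (by positivity),
    pv_odd (odd_od 0 (m+1)), padicValNat.prime_pow]
  omega

lemma pv_bG (r m : ℕ) : pv (bG r m) = (m - 1) + pv (fall 0 m) := by
  unfold bG
  have p1 : 0 < (2:ℕ)^(m-1) := (by positivity)
  rw [padicValNat.mul (Nat.mul_pos (Nat.mul_pos (od_pos _ _) (od_pos _ _)) p1).ne' (fall_pos 0 m).ne',
    padicValNat.mul (Nat.mul_pos (od_pos _ _) (od_pos _ _)).ne' p1.ne',
    padicValNat.mul (od_pos 0 (r+1)).ne' (od_pos m r).ne',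
    pv_odd (odd_od 0 (r+1)), pv_odd (odd_od m r), padicValNat.prime_pow]
  omega

/-- The key non-coincidence: a horizontal big side never equals a vertical big side. -/
lemma bX_ne_bG (r m m' : ℕ) (hm1 : 1 ≤ m) (hm : m < r) (hm'1 : 1 ≤ m') (hm' : m' ≤ r) :
    bX r m ≠ bG r m' := by
  intro h
  have hpv : pv (bX r m) = pv (bG r m') := by rw [h]
  rw [pv_bX, pv_bG] at hpv
  have h1 : pv (fall 0 m) + pv (fall m r) = pv (fall 0 r) := pv_fall_add (by omega)
  have h2 : m + pv (fall 0 m) < r + pv (fall 0 r) := pv_psi_strictMono (by omega)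
  have h3 : m' + pv (fall 0 m') ≤ r + pv (fall 0 r) := by
    rcases Nat.lt_or_ge m' r with h'|h'
    · exact (pv_psi_strictMono h').le
    · have : m' = r := by omega
      rw [this]
  omega

end Spiral
namespace Spiral
open Finset

def X (r c : ℕ) : ℕ := if c ≤ r then bX r (r - c) else 0
def G (r c : ℕ) : ℕ := if c < r then bG r (r - c) else if c = r then g r else 0

variable {r : ℕ}

lemma X_zero : X r 0 = NN r := by simp [X, bX_top]

lemma G_zero (hr : 1 ≤ r) : G r 0 = NN r := by
  unfold G
  rw [if_pos (by omega : (0:ℕ) < r)]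
  have e : r - 0 = r := rfl
  rw [e, bG_top]

lemma g_ge_one (hr : 1 ≤ r) : 1 ≤ g r := by
  have h1 := two_g_add_one r hr
  have h2 := W_ge_three r hr
  omega

lemma X_succ_lt (hr : 1 ≤ r) {c : ℕ} (hc : c ≤ r) : X r (c+1) < X r c := by
  rcases Nat.lt_or_ge c r with h|h
  · have hstep := bX_step (r := r) (m := r - c - 1) (by omega)
    have hvw := vw_pos r (r - c - 1)
    have e2 : r - c - 1 + 1 = r - c := by omega
    rw [e2] at hstep
    have e1 : r - (c+1) = r - c - 1 := by omega
    simp only [X, if_pos (by omega : c + 1 ≤ r), if_pos hc, e1]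
    omega
  · have hc' : c = r := by omega
    rw [hc']
    simp only [X, if_pos (le_refl r), if_neg (by omega : ¬ r + 1 ≤ r)]
    exact bX_pos r (r - r)

lemma X_anti : Antitone (X r) := by
  apply antitone_nat_of_succ_le
  intro c
  rcases Nat.lt_or_ge r c with h|h
  · simp only [X, if_neg (by omega : ¬ c + 1 ≤ r), if_neg (by omega : ¬ c ≤ r), le_refl]
  · rcases Nat.eq_zero_or_pos r with h0|h0
    · subst h0
      simp [X, Nat.le_zero.1 h]
    · exact (X_succ_lt h0 h).le

lemma G_succ_lt (hr : 1 ≤ r) {c : ℕ} (hc : c ≤ r) : G r (c+1) < G r c := by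
  rcases Nat.lt_or_ge (c+1) r with h|h
  · have hstep := bG_step (r := r) (m := r - c - 1) (by omega) (by omega)
    have hpos := hh_pos r (r - c - 1)
    have e2 : r - c - 1 + 1 = r - c := by omega
    rw [e2] at hstep
    have e1 : r - (c+1) = r - c - 1 := by omega
    simp only [G, if_pos h, if_pos (by omega : c < r), e1]
    omega
  · rcases Nat.lt_or_ge c r with h'|h'
    · -- c+1 = r
      have e1 : r - c = 1 := by omega
      simp only [G, if_neg (by omega : ¬ c+1 < r), if_pos (by omega : c+1 = r), if_pos h', e1]
      rw [bG_one r hr, ← two_g_add_one r hr]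
      have := g_ge_one hr
      omega
    · -- c = r
      have hc' : c = r := by omega
      rw [hc']
      simp only [G, if_neg (by omega : ¬ r+1 < r), if_neg (by omega : ¬ r+1 = r),
        if_neg (by omega : ¬ r < r), if_pos rfl]
      exact g_ge_one hr

lemma G_anti (hr : 1 ≤ r) : Antitone (G r) := by
  apply antitone_nat_of_succ_le
  intro c
  rcases Nat.lt_or_ge r c with h|h
  · simp [G, if_neg (by omega : ¬ c + 1 < r), if_neg (by omega : ¬ c < r),
      if_neg (by omega : ¬ c + 1 = r), if_neg (by omega : ¬ c = r)]
  · exact (G_succ_lt hr h).le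

lemma X_strict (hr : 1 ≤ r) {a b : ℕ} (hab : a < b) (hb : b ≤ r+1) : X r b < X r a :=
  lt_of_le_of_lt (X_anti (by omega : a+1 ≤ b)) (X_succ_lt hr (by omega))

lemma G_strict (hr : 1 ≤ r) {a b : ℕ} (hab : a < b) (hb : b ≤ r+1) : G r b < G r a :=
  lt_of_le_of_lt (G_anti hr (by omega : a+1 ≤ b)) (G_succ_lt hr (by omega))

lemma X_le_NN : X r c ≤ NN r := by
  have := X_anti (Nat.zero_le c) (r := r)
  rwa [X_zero] at this

lemma G_le_NN (hr : 1 ≤ r) {c : ℕ} : G r c ≤ NN r := by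
  have := G_anti hr (Nat.zero_le c)
  rwa [G_zero hr] at this

lemma X_last : X r (r+1) = 0 := by simp [X]
lemma G_last : G r (r+1) = 0 := by simp [G, Nat.ne_of_gt (Nat.lt_succ_self r)]

lemma X_pos (hr : 1 ≤ r) {c : ℕ} (hc : c ≤ r) : 0 < X r c := by
  have : X r (r+1) < X r c := by
    rcases Nat.lt_or_ge c (r+1) with h|h
    · exact X_strict hr h (le_refl _)
    · omega
  rw [X_last] at this; omega

lemma G_pos (hr : 1 ≤ r) {c : ℕ} (hc : c ≤ r) : 0 < G r c := by
  have : G r (r+1) < G r c := G_strict hr (by omega) (le_refl _)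
  rw [G_last] at this; omega

/-- the rectangles -/
def HRect (r a : ℕ) : Rect := ⟨0, NN r - G r (a-1), X r a, G r (a-1) - G r a⟩
def VRect (r a : ℕ) : Rect := ⟨X r a, NN r - G r (a-1), X r (a-1) - X r a, G r (a-1)⟩

def F (r i : ℕ) : Rect := if i < r then HRect r (i+1) else VRect r (i - r + 1)
def rects (r : ℕ) : Finset Rect := (Finset.range (2*r+1)).image (F r)

lemma HRect_covers (hr : 1 ≤ r) {a : ℕ} (ha1 : 1 ≤ a) (ha2 : a ≤ r) (i j : ℕ) :
    (HRect r a).Covers i j ↔ i < X r a ∧ NN r - G r (a-1) ≤ j ∧ j < NN r - G r a := by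
  have h1 : G r a ≤ G r (a-1) := G_anti hr (by omega)
  have h2 : G r (a-1) ≤ NN r := G_le_NN hr
  unfold HRect Rect.Covers
  simp only
  omega

lemma VRect_covers (hr : 1 ≤ r) {a : ℕ} (ha1 : 1 ≤ a) (ha2 : a ≤ r+1) (i j : ℕ) :
    (VRect r a).Covers i j ↔
      X r a ≤ i ∧ i < X r (a-1) ∧ NN r - G r (a-1) ≤ j ∧ j < NN r := by
  have h1 : X r a ≤ X r (a-1) := X_anti (by omega)
  have h2 : G r (a-1) ≤ NN r := G_le_NN hr
  unfold VRect Rect.Covers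
  simp only
  omega

/-- crossing lemma for antitone sequences -/
lemma crossing (f : ℕ → ℕ) (hf : Antitone f) (p t : ℕ) (h0 : t ≤ f 0) (hp : f p < t) :
    ∃ c, c < p ∧ f (c+1) < t ∧ t ≤ f c := by
  have hspec : t ≤ f (Nat.findGreatest (fun c => t ≤ f c) p) :=
    Nat.findGreatest_spec (P := fun c => t ≤ f c) (Nat.zero_le p) h0
  have hcle : Nat.findGreatest (fun c => t ≤ f c) p ≤ p := Nat.findGreatest_le p
  have hcp : Nat.findGreatest (fun c => t ≤ f c) p < p := by
    rcases Nat.lt_or_ge (Nat.findGreatest (fun c => t ≤ f c) p) p with h|h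
    · exact h
    · have he : Nat.findGreatest (fun c => t ≤ f c) p = p := by omega
      rw [he] at hspec; omega
  have hgt : ¬ (t ≤ f (Nat.findGreatest (fun c => t ≤ f c) p + 1)) :=
    Nat.findGreatest_is_greatest (P := fun c => t ≤ f c) (n := p) (Nat.lt_succ_self _) (by omega)
  exact ⟨_, hcp, by omega, hspec⟩

end Spiral
namespace Spiral
open Finset

variable {r : ℕ}

lemma HRect_mem {a : ℕ} (ha1 : 1 ≤ a) (ha2 : a ≤ r) : HRect r a ∈ rects r := by
  apply Finset.mem_image.2
  exact ⟨a - 1, Finset.mem_range.2 (by omega), by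
    unfold F; rw [if_pos (by omega : a - 1 < r)]; congr 1; omega⟩

lemma VRect_mem {a : ℕ} (ha1 : 1 ≤ a) (ha2 : a ≤ r+1) : VRect r a ∈ rects r := by
  apply Finset.mem_image.2
  exact ⟨r + a - 1, Finset.mem_range.2 (by omega), by
    unfold F; rw [if_neg (by omega : ¬ r + a - 1 < r)]; congr 1; omega⟩

lemma mem_rects {R : Rect} (hR : R ∈ rects r) :
    (∃ a, 1 ≤ a ∧ a ≤ r ∧ R = HRect r a) ∨ (∃ a, 1 ≤ a ∧ a ≤ r+1 ∧ R = VRect r a) := by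
  obtain ⟨i, hi, hFi⟩ := Finset.mem_image.1 hR
  rw [Finset.mem_range] at hi
  unfold F at hFi
  rcases Nat.lt_or_ge i r with h|h
  · rw [if_pos h] at hFi
    exact Or.inl ⟨i+1, by omega, by omega, hFi.symm⟩
  · rw [if_neg (by omega)] at hFi
    exact Or.inr ⟨i - r + 1, by omega, by omega, hFi.symm⟩

/-- Existence of a covering rectangle. -/
lemma cover_exists (hr : 1 ≤ r) {i j : ℕ} (hi : i < NN r) (hj : j < NN r) :
    ∃ R, R ∈ rects r ∧ R.Covers i j := by
  obtain ⟨c, hcp, hc1, hc2⟩ := crossing (G r) (G_anti hr) (r+1) (NN r - j)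
    (by rw [G_zero hr]; omega) (by rw [G_last]; omega)
  -- band a = c+1 : NN - G(c) ≤ j < NN - G(c+1)
  have hGle : G r c ≤ NN r := G_le_NN hr
  have hGle1 : G r (c+1) ≤ NN r := G_le_NN hr
  rcases Nat.lt_or_ge i (X r (c+1)) with h|h
  · -- horizontal rectangle
    have hc_r : c + 1 ≤ r := by
      by_contra hcon
      have : c + 1 = r + 1 := by omega
      rw [this, X_last] at h; omega
    refine ⟨HRect r (c+1), HRect_mem (by omega) hc_r, ?_⟩
    rw [HRect_covers hr (by omega) hc_r]
    have e : c + 1 - 1 = c := by omega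
    rw [e]
    omega
  · -- vertical rectangle
    obtain ⟨c', hcp', hc1', hc2'⟩ := crossing (X r) X_anti (r+1) (i+1)
      (by rw [X_zero]; omega) (by rw [X_last]; omega)
    refine ⟨VRect r (c'+1), VRect_mem (by omega) (by omega), ?_⟩
    rw [VRect_covers hr (by omega) (by omega)]
    have e : c' + 1 - 1 = c' := by omega
    rw [e]
    -- need : NN - G c' ≤ j, i.e. G c' ≥ NN - j; have G c ≥ NN - j and c' ≤ c
    have hcc : c' ≤ c := by
      by_contra hcon
      have h1 : X r c' ≤ X r (c+1) := X_anti (by omega)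
      omega
    have hGc : G r c ≤ G r c' := G_anti hr hcc
    omega

/-- Any two covering rectangles are equal. -/
lemma cover_unique (hr : 1 ≤ r) {i j : ℕ} {R R' : Rect} (hR : R ∈ rects r)
    (hR' : R' ∈ rects r) (hc : R.Covers i j) (hc' : R'.Covers i j) : R = R' := by
  -- helper facts
  have HH : ∀ a b : ℕ, 1 ≤ a → a ≤ r → 1 ≤ b → b ≤ r →
      (HRect r a).Covers i j → (HRect r b).Covers i j → a = b := by
    intro a b ha1 ha2 hb1 hb2 hca hcb
    rw [HRect_covers hr ha1 ha2] at hca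
    rw [HRect_covers hr hb1 hb2] at hcb
    by_contra hne
    rcases Nat.lt_or_ge a b with h|h
    · have h1 : G r (b-1) ≤ G r a := G_anti hr (by omega)
      have h2 : G r (b-1) ≤ NN r := G_le_NN hr
      omega
    · have h1 : G r (a-1) ≤ G r b := G_anti hr (by omega)
      have h2 : G r (a-1) ≤ NN r := G_le_NN hr
      omega
  have VV : ∀ a b : ℕ, 1 ≤ a → a ≤ r+1 → 1 ≤ b → b ≤ r+1 →
      (VRect r a).Covers i j → (VRect r b).Covers i j → a = b := by
    intro a b ha1 ha2 hb1 hb2 hca hcb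
    rw [VRect_covers hr ha1 ha2] at hca
    rw [VRect_covers hr hb1 hb2] at hcb
    by_contra hne
    rcases Nat.lt_or_ge a b with h|h
    · have h1 : X r (b-1) ≤ X r a := X_anti (by omega)
      omega
    · have h1 : X r (a-1) ≤ X r b := X_anti (by omega)
      omega
  have HV : ∀ a b : ℕ, 1 ≤ a → a ≤ r → 1 ≤ b → b ≤ r+1 →
      (HRect r a).Covers i j → (VRect r b).Covers i j → False := by
    intro a b ha1 ha2 hb1 hb2 hca hcb
    rw [HRect_covers hr ha1 ha2] at hca
    rw [VRect_covers hr hb1 hb2] at hcb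
    have hab : a < b := by
      by_contra hcon
      have h1 : X r a ≤ X r b := X_anti (by omega)
      omega
    have h1 : G r (b-1) ≤ G r a := G_anti hr (by omega)
    have h2 : G r (b-1) ≤ NN r := G_le_NN hr
    omega
  rcases mem_rects hR with ⟨a, ha1, ha2, rfl⟩ | ⟨a, ha1, ha2, rfl⟩ <;>
    rcases mem_rects hR' with ⟨b, hb1, hb2, rfl⟩ | ⟨b, hb1, hb2, rfl⟩
  · rw [HH a b ha1 ha2 hb1 hb2 hc hc']
  · exact absurd (HV a b ha1 ha2 hb1 hb2 hc hc') (by simp)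
  · exact absurd (HV b a hb1 hb2 ha1 ha2 hc' hc) (by simp)
  · rw [VV a b ha1 ha2 hb1 hb2 hc hc']

/-- cardinality -/
lemma card_rects (hr : 1 ≤ r) : (rects r).card = 2*r + 1 := by
  rw [rects, Finset.card_image_of_injOn, Finset.card_range]
  intro i0 hi0 i1 hi1 heq
  rw [Finset.mem_coe, Finset.mem_range] at hi0 hi1
  unfold F at heq
  have hXpos : ∀ c : ℕ, c ≤ r → 0 < X r c := fun c hc => X_pos hr hc
  rcases Nat.lt_or_ge i0 r with h0|h0 <;> rcases Nat.lt_or_ge i1 r with h1|h1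
  · rw [if_pos h0, if_pos h1] at heq
    have hy := congrArg Rect.y heq
    unfold HRect at hy
    simp only at hy
    have e0 : i0 + 1 - 1 = i0 := by omega
    have e1 : i1 + 1 - 1 = i1 := by omega
    rw [e0, e1] at hy
    by_contra hne
    rcases Nat.lt_or_ge i0 i1 with h|h
    · have := G_strict hr h (by omega)
      have h2 : G r i0 ≤ NN r := G_le_NN hr
      omega
    · have hlt : i1 < i0 := by omega
      have := G_strict hr hlt (by omega)
      have h2 : G r i1 ≤ NN r := G_le_NN hr
      omega
  · rw [if_pos h0, if_neg (by omega)] at heq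
    exfalso
    have hx := congrArg Rect.x heq
    have hy := congrArg Rect.y heq
    unfold HRect VRect at hx hy
    simp only at hx hy
    rcases Nat.lt_or_ge (i1 - r + 1) (r+1) with hb|hb
    · have := hXpos (i1 - r + 1) (by omega)
      omega
    · have hb' : i1 - r + 1 = r + 1 := by omega
      rw [hb'] at hy
      have e : r + 1 - 1 = r := rfl
      rw [e] at hy
      have e0 : i0 + 1 - 1 = i0 := by omega
      rw [e0] at hy
      have := G_strict hr (show i0 < r by omega) (by omega)
      have h2 : G r i0 ≤ NN r := G_le_NN hr
      omega
  · rw [if_neg (by omega), if_pos h1] at heq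
    exfalso
    have hx := congrArg Rect.x heq
    have hy := congrArg Rect.y heq
    unfold HRect VRect at hx hy
    simp only at hx hy
    rcases Nat.lt_or_ge (i0 - r + 1) (r+1) with hb|hb
    · have := hXpos (i0 - r + 1) (by omega)
      omega
    · have hb' : i0 - r + 1 = r + 1 := by omega
      rw [hb'] at hy
      have e : r + 1 - 1 = r := rfl
      rw [e] at hy
      have e0 : i1 + 1 - 1 = i1 := by omega
      rw [e0] at hy
      have := G_strict hr (show i1 < r by omega) (by omega)
      have h2 : G r i1 ≤ NN r := G_le_NN hr
      omega
  · rw [if_neg (by omega), if_neg (by omega)] at heq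
    have hx := congrArg Rect.x heq
    unfold VRect at hx
    simp only at hx
    by_contra hne
    have hne' : i0 - r + 1 ≠ i1 - r + 1 := by omega
    rcases Nat.lt_or_ge (i0 - r + 1) (i1 - r + 1) with h|h
    · have := X_strict hr h (by omega)
      omega
    · have := X_strict hr (show i1 - r + 1 < i0 - r + 1 by omega) (by omega)
      omega

end Spiral
namespace Spiral
open Finset

variable {r : ℕ}

lemma half_pos : 0 < half r :=
  Nat.mul_pos (Nat.mul_pos ((by positivity)) (fall_pos 0 r)) (fall_pos 0 r)

lemma three_half_le_S (hr : 1 ≤ r) : 3 * half r ≤ S r :=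
  Nat.mul_le_mul_right _ (W_ge_three r hr)

lemma X_eq {a : ℕ} (ha : a ≤ r) : X r a = bX r (r - a) := by simp [X, ha]

lemma G_eq {a : ℕ} (ha : a < r) : G r a = bG r (r - a) := by simp [G, ha]

lemma G_eq_pred {a : ℕ} (ha1 : 1 ≤ a) (ha : a ≤ r) : G r (a-1) = bG r (r - a + 1) := by
  rw [G_eq (by omega : a - 1 < r)]
  congr 1
  omega

lemma Hheight_eq {a : ℕ} (ha1 : 1 ≤ a) (ha2 : a + 1 ≤ r) :
    G r (a-1) - G r a = hh r (r-a) := by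
  rw [G_eq_pred ha1 (by omega), G_eq (by omega : a < r),
    bG_step (r := r) (by omega : 1 ≤ r - a) (by omega : r - a < r)]
  omega

lemma Vwidth_eq {a : ℕ} (ha1 : 1 ≤ a) (ha2 : a ≤ r) :
    X r (a-1) - X r a = vw r (r-a) := by
  have e : X r (a-1) = bX r (r - a + 1) := by
    rw [X_eq (by omega : a - 1 ≤ r)]
    congr 1
    omega
  rw [e, X_eq ha2, bX_step (r := r) (by omega : r - a < r)]
  omega

lemma area_H_small {a : ℕ} (ha1 : 1 ≤ a) (ha2 : a + 1 ≤ r) : (HRect r a).area = S r := by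
  show X r a * (G r (a-1) - G r a) = S r
  rw [Hheight_eq ha1 ha2, X_eq (by omega)]
  exact bX_mul_hh r (r-a) (by omega) (by omega)

lemma area_H_top (hr : 1 ≤ r) : (HRect r r).area = S r + half r := by
  show X r r * (G r (r-1) - G r r) = S r + half r
  have e1 : X r r = bX r 0 := by rw [X_eq (le_refl r)]; congr 1; omega
  have e2 : G r (r-1) = bG r 1 := by rw [G_eq_pred (by omega) (le_refl r)]; congr 1; omega
  have e3 : G r r = g r := by simp [G]
  rw [e1, e2, e3, bG_one r hr, ← two_g_add_one r hr]
  have e4 : 2 * g r + 1 - g r = g r + 1 := by omega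
  rw [e4]
  exact area_Hr r hr

lemma area_V_small {a : ℕ} (ha1 : 1 ≤ a) (ha2 : a ≤ r) : (VRect r a).area = S r := by
  show (X r (a-1) - X r a) * G r (a-1) = S r
  rw [Vwidth_eq ha1 ha2, G_eq_pred ha1 ha2]
  exact vw_mul_bG r (r-a) (by omega)

lemma area_V_last (hr : 1 ≤ r) : (VRect r (r+1)).area + half r = S r := by
  show (X r (r+1-1) - X r (r+1)) * G r (r+1-1) + half r = S r
  have e0 : r + 1 - 1 = r := rfl
  have e1 : X r r = bX r 0 := by rw [X_eq (le_refl r)]; congr 1; omega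
  have e3 : G r r = g r := by simp [G]
  rw [e0, X_last, e1, e3, Nat.sub_zero]
  exact area_Vlast r hr

lemma area_bounds (hr : 1 ≤ r) {R : Rect} (hR : R ∈ rects r) :
    S r ≤ R.area + half r ∧ R.area ≤ S r + half r := by
  rcases mem_rects hR with ⟨a, ha1, ha2, rfl⟩ | ⟨a, ha1, ha2, rfl⟩
  · rcases Nat.lt_or_ge a r with h|h
    · rw [area_H_small ha1 (by omega)]; omega
    · have : a = r := by omega
      rw [this, area_H_top hr]; omega
  · rcases Nat.lt_or_ge a (r+1) with h|h
    · rw [area_V_small ha1 (by omega)]; omega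
    · have : a = r + 1 := by omega
      rw [this]
      have := area_V_last (r := r) hr
      omega

/-- big sides of horizontal rectangles (below the top one) exceed `bX r 0` -/
lemma X_big {a : ℕ} (ha1 : 1 ≤ a) (ha2 : a + 1 ≤ r) : bX r 0 < X r a := by
  have h := X_strict (by omega : 1 ≤ r) (show a < r by omega) (by omega)
  rw [X_eq (le_refl r)] at h
  have e : r - r = 0 := by omega
  rw [e] at h
  exact h

/-- big sides of vertical rectangles exceed `bX r 0` -/
lemma G_big {a : ℕ} (ha1 : 1 ≤ a) (ha2 : a ≤ r) : bX r 0 < G r (a-1) := by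
  have hr : 1 ≤ r := by omega
  have h1 : G r (r-1) ≤ G r (a-1) := G_anti hr (by omega)
  have h2 : G r (r-1) = bG r 1 := by rw [G_eq_pred (by omega) (le_refl r)]; congr 1; omega
  have h3 := bX0_lt_W r hr
  rw [← bG_one r hr] at h3
  omega

lemma cong_area {R R' : Rect} (h : R.Congruent R') : R.area = R'.area := by
  rcases h with ⟨h1, h2⟩ | ⟨h1, h2⟩ <;> unfold Rect.area <;> rw [h1, h2]
  exact Nat.mul_comm _ _

lemma noncong_rects (hr : 1 ≤ r) : ∀ R ∈ rects r, ∀ R' ∈ rects r,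
    R ≠ R' → ¬ R.Congruent R' := by
  intro R hR R' hR' hne hcong
  have harea := cong_area hcong
  have hhalf : 0 < half r := half_pos
  have h3S := three_half_le_S (r := r) hr
  rcases mem_rects hR with ⟨a, ha1, ha2, rfl⟩ | ⟨a, ha1, ha2, rfl⟩ <;>
    rcases mem_rects hR' with ⟨b, hb1, hb2, rfl⟩ | ⟨b, hb1, hb2, rfl⟩
  · -- H vs H
    rcases Nat.lt_or_ge a r with haa|haa
    · rcases Nat.lt_or_ge b r with hbb|hbb
      · -- both small, area S each
        have hane : a ≠ b := fun h => hne (by rw [h])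
        rcases hcong with ⟨h1, h2⟩ | ⟨h1, h2⟩
        · -- X a = X b
          have hX : X r a = X r b := h1
          rcases Nat.lt_or_ge a b with h|h
          · have := X_strict hr h (by omega); omega
          · have := X_strict hr (show b < a by omega) (by omega); omega
        · -- X a = height b
          have hX : X r a = G r (b-1) - G r b := h1
          rw [Hheight_eq hb1 (by omega)] at hX
          have hlt := hh_lt r (r-b) (by omega) (by omega)
          have hbig := X_big (r := r) ha1 (by omega)
          omega
      · -- b = r : areas differ
        have hb' : b = r := by omega
        rw [hb'] at harea
        rw [area_H_small ha1 (by omega), area_H_top hr] at harea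
        omega
    · have ha' : a = r := by omega
      rcases Nat.lt_or_ge b r with hbb|hbb
      · rw [ha'] at harea
        rw [area_H_top hr, area_H_small hb1 (by omega)] at harea
        omega
      · have hb' : b = r := by omega
        exact hne (by rw [ha', hb'])
  · -- H vs V
    rcases Nat.lt_or_ge a r with haa|haa
    · rcases Nat.lt_or_ge b (r+1) with hbb|hbb
      · -- area S both; dims clash
        rcases hcong with ⟨h1, h2⟩ | ⟨h1, h2⟩
        · -- X a = vw
          have hX : X r a = X r (b-1) - X r b := h1
          rw [Vwidth_eq hb1 (by omega)] at hX
          have hlt := vw_lt r (r-b) (by omega)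
          have hbig := X_big (r := r) ha1 (by omega)
          omega
        · -- X a = G (b-1) : impossible by 2-adic valuation
          have hX : X r a = G r (b-1) := h1
          rw [X_eq (by omega), G_eq_pred hb1 (by omega)] at hX
          exact bX_ne_bG r (r-a) (r-b+1) (by omega) (by omega) (by omega) (by omega) hX
      · -- b = r+1, area S vs S - half
        have hb' : b = r + 1 := by omega
        rw [hb'] at harea
        rw [area_H_small ha1 (by omega)] at harea
        have := area_V_last (r := r) hr
        omega
    · -- a = r : area S + half vs S or S - half
      have ha' : a = r := by omega
      rw [ha'] at harea
      rw [area_H_top hr] at harea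
      rcases Nat.lt_or_ge b (r+1) with hbb|hbb
      · rw [area_V_small hb1 (by omega)] at harea
        omega
      · have hb' : b = r + 1 := by omega
        rw [hb'] at harea
        have := area_V_last (r := r) hr
        omega
  · -- V vs H (symmetric)
    rcases Nat.lt_or_ge b r with hbb|hbb
    · rcases Nat.lt_or_ge a (r+1) with haa|haa
      · rcases hcong with ⟨h1, h2⟩ | ⟨h1, h2⟩
        · have hX : X r b = X r (a-1) - X r a := h1.symm
          rw [Vwidth_eq ha1 (by omega)] at hX
          have hlt := vw_lt r (r-a) (by omega)
          have hbig := X_big (r := r) hb1 (by omega)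
          omega
        · -- h2 : height V = width H, i.e. G (a-1) = X b
          have hX : X r b = G r (a-1) := h2.symm
          rw [X_eq (by omega), G_eq_pred ha1 (by omega)] at hX
          exact bX_ne_bG r (r-b) (r-a+1) (by omega) (by omega) (by omega) (by omega) hX
      · have ha' : a = r + 1 := by omega
        rw [ha'] at harea
        rw [area_H_small hb1 (by omega)] at harea
        have := area_V_last (r := r) hr
        omega
    · have hb' : b = r := by omega
      rw [hb'] at harea
      rw [area_H_top hr] at harea
      rcases Nat.lt_or_ge a (r+1) with haa|haa
      · rw [area_V_small ha1 (by omega)] at harea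
        omega
      · have ha' : a = r + 1 := by omega
        rw [ha'] at harea
        have := area_V_last (r := r) hr
        omega
  · -- V vs V
    rcases Nat.lt_or_ge a (r+1) with haa|haa
    · rcases Nat.lt_or_ge b (r+1) with hbb|hbb
      · have hane : a ≠ b := fun h => hne (by rw [h])
        rcases hcong with ⟨h1, h2⟩ | ⟨h1, h2⟩
        · -- heights equal: G (a-1) = G (b-1)
          have hG : G r (a-1) = G r (b-1) := h2
          rcases Nat.lt_or_ge a b with h|h
          · have := G_strict hr (show a - 1 < b - 1 by omega) (by omega); omega
          · have := G_strict hr (show b - 1 < a - 1 by omega) (by omega); omega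
        · -- width a = height b
          have hX : X r (a-1) - X r a = G r (b-1) := h1
          rw [Vwidth_eq ha1 (by omega)] at hX
          have hlt := vw_lt r (r-a) (by omega)
          have hbig := G_big (r := r) hb1 (by omega)
          omega
      · have hb' : b = r + 1 := by omega
        rw [hb'] at harea
        rw [area_V_small ha1 (by omega)] at harea
        have := area_V_last (r := r) hr
        omega
    · have ha' : a = r + 1 := by omega
      rcases Nat.lt_or_ge b (r+1) with hbb|hbb
      · rw [ha'] at harea
        rw [area_V_small hb1 (by omega)] at harea
        have := area_V_last (r := r) hr
        omega
      · exact hne (by rw [ha', show b = r + 1 by omega])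

end Spiral
namespace Spiral
open Finset

/-- The spiral Mondrian partition. -/
def mondrian (r : ℕ) (hr : 1 ≤ r) : Mondrian (NN r) where
  rects := rects r
  pos := by
    intro R hR
    rcases mem_rects hR with ⟨a, ha1, ha2, rfl⟩ | ⟨a, ha1, ha2, rfl⟩
    · constructor
      · exact X_pos hr ha2
      · show 0 < G r (a-1) - G r a
        have := G_strict hr (show a - 1 < a by omega) (by omega)
        omega
    · constructor
      · show 0 < X r (a-1) - X r a
        have := X_strict hr (show a - 1 < a by omega) (by omega)
        omega
      · exact G_pos hr (by omega)
  inside := by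
    intro R hR
    rcases mem_rects hR with ⟨a, ha1, ha2, rfl⟩ | ⟨a, ha1, ha2, rfl⟩
    · have h1 : X r a ≤ NN r := X_le_NN
      have h2 : G r a ≤ G r (a-1) := G_anti hr (by omega)
      have h3 : G r (a-1) ≤ NN r := G_le_NN hr
      show 0 + X r a ≤ NN r ∧ (NN r - G r (a-1)) + (G r (a-1) - G r a) ≤ NN r
      omega
    · have h1 : X r (a-1) ≤ NN r := X_le_NN
      have h2 : X r a ≤ X r (a-1) := X_anti (by omega)
      have h3 : G r (a-1) ≤ NN r := G_le_NN hr
      show X r a + (X r (a-1) - X r a) ≤ NN r ∧ (NN r - G r (a-1)) + G r (a-1) ≤ NN r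
      omega
  cover := by
    intro i j hi hj
    obtain ⟨R, hmem, hcov⟩ := cover_exists hr hi hj
    exact ⟨R, ⟨hmem, hcov⟩, fun R' h' => cover_unique hr h'.1 hmem h'.2 hcov⟩
  noncong := noncong_rects hr

lemma mondrian_defect (r : ℕ) (hr : 1 ≤ r) : (mondrian r hr).defect = 2 * half r := by
  have hrects : (mondrian r hr).rects = rects r := rfl
  unfold Mondrian.defect
  rw [hrects]
  apply le_antisymm
  · apply Finset.sup_le
    intro R hR
    apply Finset.sup_le
    intro R' hR'
    have b1 := area_bounds hr hR
    have b2 := area_bounds hr hR'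
    omega
  · have hm1 : HRect r r ∈ rects r := HRect_mem (by omega) (le_refl r)
    have hm2 : VRect r (r+1) ∈ rects r := VRect_mem (by omega) (le_refl _)
    have h1 : (HRect r r).area - (VRect r (r+1)).area ≤
        (rects r).sup (fun R' => (HRect r r).area - R'.area) :=
      Finset.le_sup (f := fun R' => (HRect r r).area - R'.area) hm2
    have h2 : (rects r).sup (fun R' => (HRect r r).area - R'.area) ≤
        (rects r).sup (fun R => (rects r).sup fun R' => R.area - R'.area) :=
      Finset.le_sup (f := fun R => (rects r).sup fun R' => R.area - R'.area) hm1
    have e1 := area_H_top (r := r) hr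
    have e2 := area_V_last (r := r) hr
    have h3S := three_half_le_S (r := r) hr
    omega

lemma NN_eq (r : ℕ) (hr : 1 ≤ r) : (2*r+1).factorial / 2 = NN r := by
  have h1 : (2*r+1).factorial = Nat.doubleFactorial (2*r+1) * Nat.doubleFactorial (2*r) :=
    Nat.factorial_eq_mul_doubleFactorial (2*r)
  rw [h1, Nat.doubleFactorial_two_mul, ← od0_eq_doubleFactorial, ← fall0_eq_factorial]
  have h2 : (2:ℕ)^r = 2^(r-1) * 2 := by
    rw [← pow_succ]; congr 1; omega
  rw [h2]
  have h3 : od 0 (r+1) * (2^(r-1) * 2 * fall 0 r) = NN r * 2 := by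
    unfold NN; ring
  rw [h3, Nat.mul_div_cancel _ (by norm_num)]

lemma defect_value (r : ℕ) (hr : 1 ≤ r) :
    (Nat.doubleFactorial (2*r))^2 / 2 = 2 * half r := by
  have h1 : (Nat.doubleFactorial (2*r)) = ev0 r := by
    rw [Nat.doubleFactorial_two_mul, ev0_eq, fall0_eq_factorial]
  rw [h1, ev0_sq r hr, bX_zero r hr]
  exact Nat.mul_div_cancel_left _ (by norm_num)

end Spiral

/-- For every `r ≥ 3`, with `k = 2r + 1` and `n = k!/2`, there is a Mondrian
partition of the `n × n` square into exactly `k` rectangles with defect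
`((k−1)!!)² / 2`; in particular `d_k(n) ≤ ((k−1)!!)² / 2` and
`d(n) ≤ ((k−1)!!)² / 2`. -/
theorem spiral_construction (r : ℕ) (hr : 3 ≤ r) :
    (∃ P : Mondrian ((2 * r + 1).factorial / 2), P.rects.card = 2 * r + 1 ∧
      P.defect = (Nat.doubleFactorial (2 * r)) ^ 2 / 2) ∧
    mondrianDk ((2 * r + 1).factorial / 2) (2 * r + 1) ≤
      (Nat.doubleFactorial (2 * r)) ^ 2 / 2 ∧
    mondrianD ((2 * r + 1).factorial / 2) ≤
      (Nat.doubleFactorial (2 * r)) ^ 2 / 2 := by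
  have hr1 : 1 ≤ r := by omega
  have hN : (2 * r + 1).factorial / 2 = Spiral.NN r := Spiral.NN_eq r hr1
  have hD : (Nat.doubleFactorial (2 * r)) ^ 2 / 2 = 2 * Spiral.half r :=
    Spiral.defect_value r hr1
  rw [hN, hD]
  have hcard : (Spiral.mondrian r hr1).rects.card = 2 * r + 1 := Spiral.card_rects hr1
  have hdef : (Spiral.mondrian r hr1).defect = 2 * Spiral.half r := Spiral.mondrian_defect r hr1
  refine ⟨⟨Spiral.mondrian r hr1, hcard, hdef⟩, ?_, ?_⟩
  · exact Nat.sInf_le ⟨Spiral.mondrian r hr1, hcard, hdef⟩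
  · exact Nat.sInf_le ⟨Spiral.mondrian r hr1, by omega, hdef⟩
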